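/- Let k be a field of characteristic different from 2 and 3, and let L be a simple Lie algebra over k with a 5-grading L = ⊕_{j=−2}^{2} L_j such that L ≠ L_0. Let L = ⊕_{i=−r}^{s} L_{[i]} be a second ℤ-grading on L such that ⊕_{i=−r}^{−1} L_{[i]} is generated as a Lie algebra by L_{[−1]} ≠ 0. Assume the second grading is preserved by the grading torus of the first grading, in the sense that for every t ∈ k^×, the k-linear automorphism of L acting as multiplication by t^j on L_j (for −2 ≤ j ≤ 2) maps each subspace L_{[i]} into itself. Then L_{[−1]} is not contained in L_0. -/

import Mathlib

open DirectSum Finset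

theorem statement3
    (k : Type*) [Field k] (hchar2 : (2 : k) ≠ 0) (hchar3 : (3 : k) ≠ 0)
    (L : Type*) [LieRing L] [LieAlgebra k L]
    [LieAlgebra.IsSimple k L]
    (Lc : ℤ → Submodule k L)
    (hdirect : DirectSum.IsInternal Lc)
    (hbracket : ∀ i j : ℤ, ∀ x ∈ Lc i, ∀ y ∈ Lc j, ⁅x, y⁆ ∈ Lc (i + j))
    (hbound : ∀ i : ℤ, 2 < |i| → Lc i = ⊥)
    (hnontriv : Lc 0 ≠ ⊤)
    (r s : ℕ)
    (M : ℤ → Submodule k L)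
    (hMdirect : DirectSum.IsInternal M)
    (hMbracket : ∀ i j : ℤ, ∀ x ∈ M i, ∀ y ∈ M j, ⁅x, y⁆ ∈ M (i + j))
    (hMbound : ∀ i : ℤ, (i < -(r : ℤ) ∨ (s : ℤ) < i) → M i = ⊥)
    (hM1 : M (-1) ≠ ⊥)
    (hgen : ∀ i : ℤ, i < 0 →
      (M i : Set L) ⊆ (LieSubalgebra.lieSpan k L (M (-1) : Set L) : Set L))
    (htorus : ∀ (t : kˣ) (i : ℤ) (x : ℤ → L), (∀ j, x j ∈ Lc j) →
      (∑ j ∈ Finset.Icc (-2 : ℤ) 2, x j) ∈ M i →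
      (∑ j ∈ Finset.Icc (-2 : ℤ) 2, ((t ^ j : kˣ) : k) • x j) ∈ M i) :
    ¬ M (-1) ≤ Lc 0 := by
  intro h
  classical
  haveI dLc : DirectSum.Decomposition Lc := hdirect.chooseDecomposition
  haveI dM : DirectSum.Decomposition M := hMdirect.chooseDecomposition
  -- the subalgebra Lc 0
  set L0 : LieSubalgebra k L :=
    { Lc 0 with
      lie_mem' := fun {x y} hx hy => by simpa using hbracket 0 0 x hx y hy } with hL0
  -- negative M-components lie in Lc 0
  have hneg : ∀ i : ℤ, i < 0 → M i ≤ Lc 0 := by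
    intro i hi x hx
    have hspan : LieSubalgebra.lieSpan k L ((M (-1) : Submodule k L) : Set L) ≤ L0 :=
      (LieSubalgebra.lieSpan_le).mpr (fun z hz => h hz)
    exact hspan (hgen i hi hx)
  -- the unit t = 2
  set t : kˣ := Units.mk0 (2 : k) hchar2 with ht
  have tval : (t : k) = 2 := rfl
  have tpow_ne : ∀ j : ℤ, j ≠ 0 → j ∈ Finset.Icc (-2 : ℤ) 2 → ((t ^ j : kˣ) : k) ≠ 1 := by
    intro j hj0 hj
    obtain ⟨hlo, hhi⟩ := Finset.mem_Icc.mp hj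
    rw [Units.val_zpow_eq_zpow_val, tval]
    have h2 : (2 : k) ^ (2 : ℤ) = 4 := by norm_num
    have h1 : (2 : k) ^ (1 : ℤ) = 2 := by norm_num
    have hcases : j = -2 ∨ j = -1 ∨ j = 1 ∨ j = 2 := by omega
    rcases hcases with rfl | rfl | rfl | rfl
    · intro hh
      rw [show (-2 : ℤ) = -(2 : ℤ) from rfl, zpow_neg, inv_eq_one, h2] at hh
      exact hchar3 (by linear_combination hh)
    · intro hh
      rw [show (-1 : ℤ) = -(1 : ℤ) from rfl, zpow_neg, inv_eq_one, h1] at hh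
      exact one_ne_zero (α := k) (by linear_combination hh)
    · intro hh
      rw [h1] at hh
      exact one_ne_zero (α := k) (by linear_combination hh)
    · intro hh
      rw [h2] at hh
      exact hchar3 (by linear_combination hh)
  -- every element is the sum of its Lc-components over Icc (-2) 2
  have sumLc : ∀ x : L, ∑ j ∈ Finset.Icc (-2 : ℤ) 2, ((DirectSum.decompose Lc x j : Lc j) : L) = x := by
    intro x
    have hsub : (DirectSum.decompose Lc x).support ⊆ Finset.Icc (-2 : ℤ) 2 := by
      intro j hjs
      by_contra hj
      have hb : Lc j = ⊥ := by
        apply hbound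
        rw [Finset.mem_Icc] at hj
        rcases le_or_gt 0 j with hj0 | hj0
        · rw [abs_of_nonneg hj0]; omega
        · rw [abs_of_neg hj0]; omega
      have hz : (DirectSum.decompose Lc x j : Lc j) = 0 := by
        have hmem := hb.le (DirectSum.decompose Lc x j).2
        exact Subtype.ext (by simpa using hmem)
      exact (DFinsupp.mem_support_iff.mp hjs) hz
    have hrest : ∀ j ∈ Finset.Icc (-2 : ℤ) 2, j ∉ (DirectSum.decompose Lc x).support →
        ((DirectSum.decompose Lc x j : Lc j) : L) = 0 := by
      intro j _ hjs
      rw [DFinsupp.notMem_support_iff.mp hjs]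
      rfl
    rw [← Finset.sum_subset hsub hrest, DirectSum.sum_support_decompose]
  -- the torus automorphism θ
  set θ : L → L := fun x =>
    ∑ j ∈ Finset.Icc (-2 : ℤ) 2, ((t ^ j : kˣ) : k) • ((DirectSum.decompose Lc x j : Lc j) : L)
    with hθ
  have θ_mem : ∀ (i : ℤ) (x : L), x ∈ M i → θ x ∈ M i := by
    intro i x hx
    exact htorus t i (fun j => ((DirectSum.decompose Lc x j : Lc j) : L))
      (fun j => (DirectSum.decompose Lc x j).2) (by rw [sumLc x]; exact hx)
  have θ_fix : ∀ x ∈ Lc 0, θ x = x := by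
    intro x hx
    simp only [hθ]
    rw [Finset.sum_eq_single_of_mem 0 (by simp)]
    · rw [DirectSum.decompose_of_mem_same Lc hx]
      norm_num
    · intro j _ hj0
      rw [DirectSum.decompose_of_mem_ne Lc hx (Ne.symm hj0), smul_zero]
  have θ_eig : ∀ (j : ℤ), j ∈ Finset.Icc (-2 : ℤ) 2 → ∀ x ∈ Lc j,
      θ x = ((t ^ j : kˣ) : k) • x := by
    intro j hj x hx
    simp only [hθ]
    rw [Finset.sum_eq_single_of_mem j hj]
    · rw [DirectSum.decompose_of_mem_same Lc hx]
    · intro l _ hl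
      rw [DirectSum.decompose_of_mem_ne Lc hx (Ne.symm hl), smul_zero]
  have θ_zero : θ 0 = 0 := by
    simp only [hθ]
    simp only [DirectSum.decompose_zero]
    simp
  have θ_add : ∀ a b : L, θ (a + b) = θ a + θ b := by
    intro a b
    simp only [hθ]
    simp only [DirectSum.decompose_add, DirectSum.add_apply, Submodule.coe_add, smul_add]
    rw [Finset.sum_add_distrib]
  have θ_sum : ∀ (T : Finset ℤ) (g : ℤ → L), θ (∑ i ∈ T, g i) = ∑ i ∈ T, θ (g i) := by
    intro T g
    induction T using Finset.cons_induction with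
    | empty => simpa using θ_zero
    | cons a T ha ih => rw [Finset.sum_cons, θ_add, ih, Finset.sum_cons]
  -- uniqueness of M-components of a finite sum
  have compSum : ∀ (T : Finset ℤ) (g : ℤ → L), (∀ i, g i ∈ M i) → ∀ i : ℤ,
      ((DirectSum.decompose M (∑ i' ∈ T, g i') i : M i) : L) = if i ∈ T then g i else 0 := by
    intro T g hg i
    rw [DirectSum.decompose_sum]
    rw [DFinsupp.finset_sum_apply]
    have : ∀ i' ∈ T, ((∑ i' ∈ T, DirectSum.decompose M (g i') i : M i) : L)
        = ((∑ i' ∈ T, DirectSum.decompose M (g i') i : M i) : L) := fun _ _ => rfl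
    rw [AddSubmonoidClass.coe_finset_sum]
    have heach : ∀ i' : ℤ, ((DirectSum.decompose M (g i') i : M i) : L)
        = if i' = i then g i' else 0 := by
      intro i'
      by_cases hii : i' = i
      · subst hii
        rw [DirectSum.decompose_of_mem_same M (hg i'), if_pos rfl]
      · rw [DirectSum.decompose_of_mem_ne M (hg i') hii, if_neg hii]
    rw [Finset.sum_congr rfl (fun i' _ => heach i')]
    exact Finset.sum_ite_eq' T i g
  -- the nonnegative part P
  set P : Submodule k L := ⨆ i : {i : ℤ // 0 ≤ i}, M i.1 with hP
  have hMP : ∀ i : ℤ, 0 ≤ i → M i ≤ P := fun i hi =>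
    le_iSup (fun i : {i : ℤ // 0 ≤ i} => M i.1) ⟨i, hi⟩
  -- key claim: nonzero-degree Lc components lie in P
  have key : ∀ (j : ℤ), j ≠ 0 → ∀ x ∈ Lc j, x ∈ P := by
    intro j hj x hx
    by_cases hjIcc : j ∈ Finset.Icc (-2 : ℤ) 2
    · set c : ℤ → L := fun i => ((DirectSum.decompose M x i : M i) : L) with hc
      have hcmem : ∀ i, c i ∈ M i := fun i => (DirectSum.decompose M x i).2
      set T : Finset ℤ := (DirectSum.decompose M x).support with hT
      have hsupp : x = ∑ i ∈ T, c i := (DirectSum.sum_support_decompose M x).symm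
      have h1 : θ x = ∑ i ∈ T, θ (c i) := by rw [hsupp, θ_sum]
      have h2 : θ x = ∑ i ∈ T, ((t ^ j : kˣ) : k) • c i := by
        rw [θ_eig j hjIcc x hx, hsupp, Finset.smul_sum]
      have hcomp : ∀ i ∈ T, θ (c i) = ((t ^ j : kˣ) : k) • c i := by
        intro i hi
        have e1 := compSum T (fun i => θ (c i)) (fun i => θ_mem i _ (hcmem i)) i
        have e2 := compSum T (fun i => ((t ^ j : kˣ) : k) • c i)
          (fun i => Submodule.smul_mem _ _ (hcmem i)) i
        rw [← h1] at e1
        rw [← h2] at e2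
        rw [if_pos hi] at e1 e2
        rw [← e1, ← e2]
      have hzero : ∀ i ∈ T, i < 0 → c i = 0 := by
        intro i hi hineg
        have hfix : θ (c i) = c i := θ_fix _ (hneg i hineg (hcmem i))
        have heq : (((t ^ j : kˣ) : k) - 1) • c i = 0 := by
          rw [sub_smul, one_smul, ← hcomp i hi, hfix, sub_self]
        rcases smul_eq_zero.mp heq with h' | h'
        · exact absurd (sub_eq_zero.mp h') (tpow_ne j hj hjIcc)
        · exact h'
      rw [hsupp]
      apply Submodule.sum_mem
      intro i hi
      by_cases hi0 : 0 ≤ i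
      · exact hMP i hi0 (hcmem i)
      · rw [hzero i hi (lt_of_not_ge hi0)]
        exact P.zero_mem
    · have hb : Lc j = ⊥ := by
        apply hbound
        rw [Finset.mem_Icc] at hjIcc
        rcases le_or_gt 0 j with hj0' | hj0'
        · rw [abs_of_nonneg hj0']; omega
        · rw [abs_of_neg hj0']; omega
      have hx0 : x = 0 := by simpa using hb.le hx
      rw [hx0]
      exact P.zero_mem
  -- P is a Lie subalgebra
  have hPbr : ∀ x ∈ P, ∀ y ∈ P, ⁅x, y⁆ ∈ P := by
    intro x hx
    refine Submodule.iSup_induction (motive := fun x => ∀ y ∈ P, ⁅x, y⁆ ∈ P)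
      (fun i : {i : ℤ // 0 ≤ i} => M i.1) hx ?_ ?_ ?_
    · rintro ⟨i, hi⟩ x hxi y hy
      refine Submodule.iSup_induction (motive := fun y => ⁅x, y⁆ ∈ P)
        (fun i : {i : ℤ // 0 ≤ i} => M i.1) hy ?_ ?_ ?_
      · rintro ⟨i', hi'⟩ y hyi
        exact hMP (i + i') (by omega) (hMbracket i i' x hxi y hyi)
      · show ⁅x, (0 : L)⁆ ∈ P
        rw [lie_zero]; exact P.zero_mem
      · intro y z hy hz
        show ⁅x, y + z⁆ ∈ P
        rw [lie_add]; exact P.add_mem hy hz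
    · intro y hy
      show ⁅(0 : L), y⁆ ∈ P
      rw [zero_lie]; exact P.zero_mem
    · intro x z hx' hz' y hy
      show ⁅x + z, y⁆ ∈ P
      rw [add_lie]; exact P.add_mem (hx' y hy) (hz' y hy)
  set PL : LieSubalgebra k L := { P with lie_mem' := fun {x y} hx hy => hPbr x hx y hy }
  -- the set S of nonzero-degree elements and the ideal it generates
  set S : Set L := {x | ∃ j : ℤ, j ≠ 0 ∧ x ∈ Lc j} with hS
  set Q : LieSubalgebra k L := LieSubalgebra.lieSpan k L S with hQdef
  have hSQ : S ⊆ Q := LieSubalgebra.subset_lieSpan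
  have hQP : Q ≤ PL := (LieSubalgebra.lieSpan_le).mpr (by
    rintro z ⟨j, hj, hz⟩
    exact key j hj z hz)
  -- [Lc 0, Q] ⊆ Q
  have hQ0 : ∀ y ∈ Q, ∀ x ∈ Lc 0, ⁅x, y⁆ ∈ Q := by
    set Tsub : Submodule k L :=
      { carrier := {y | y ∈ Q ∧ ∀ x ∈ Lc 0, ⁅x, y⁆ ∈ Q}
        add_mem' := fun {a b} ha hb => ⟨Q.add_mem ha.1 hb.1, fun x hx => by
          rw [lie_add]; exact Q.add_mem (ha.2 x hx) (hb.2 x hx)⟩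
        zero_mem' := ⟨Q.zero_mem, fun x hx => by rw [lie_zero]; exact Q.zero_mem⟩
        smul_mem' := fun c a ha => ⟨Q.smul_mem c ha.1, fun x hx => by
          rw [lie_smul]; exact Q.smul_mem c (ha.2 x hx)⟩ } with hTsub
    set TL : LieSubalgebra k L :=
      { Tsub with
        lie_mem' := fun {a b} ha hb => ⟨Q.lie_mem ha.1 hb.1, fun x hx => by
          rw [leibniz_lie]
          exact Q.add_mem (Q.lie_mem (ha.2 x hx) hb.1) (Q.lie_mem ha.1 (hb.2 x hx))⟩ }
    have hQT : Q ≤ TL := by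
      rw [hQdef]
      apply (LieSubalgebra.lieSpan_le).mpr
      rintro z ⟨j, hj, hz⟩
      refine ⟨hSQ ⟨j, hj, hz⟩, fun x hx => ?_⟩
      apply hSQ
      exact ⟨j, hj, by simpa using hbracket 0 j x hx z hz⟩
    intro y hy x hx
    exact (hQT hy).2 x hx
  have sum_lie' : ∀ (T : Finset ℤ) (g : ℤ → L) (m : L),
      ⁅∑ i ∈ T, g i, m⁆ = ∑ i ∈ T, ⁅g i, m⁆ := by
    intro T g m
    induction T using Finset.cons_induction with
    | empty => simp
    | cons a T ha ih => rw [Finset.sum_cons, add_lie, ih, Finset.sum_cons]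
  -- Q is an ideal
  set I : LieIdeal k L :=
    { Q.toSubmodule with
      lie_mem := fun {x m} hm => by
        have : ⁅x, m⁆ = ∑ j ∈ Finset.Icc (-2 : ℤ) 2,
            ⁅((DirectSum.decompose Lc x j : Lc j) : L), m⁆ := by
          rw [← sum_lie', sumLc]
        rw [this]
        apply Submodule.sum_mem
        intro j _
        by_cases hj0 : j = 0
        · subst hj0
          exact hQ0 m hm _ (DirectSum.decompose Lc x 0).2
        · exact Q.lie_mem (hSQ ⟨j, hj0, (DirectSum.decompose Lc x j).2⟩) hm } with hI
  -- I is nonzero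
  have hIne : I ≠ ⊥ := by
    have hex : ∃ j : ℤ, j ≠ 0 ∧ Lc j ≠ ⊥ := by
      by_contra hno
      push_neg at hno
      apply hnontriv
      rw [eq_top_iff]
      intro x _
      rw [← sumLc x]
      apply Submodule.sum_mem
      intro j _
      by_cases hj0 : j = 0
      · subst hj0; exact (DirectSum.decompose Lc x 0).2
      · have hmem : ((DirectSum.decompose Lc x j : Lc j) : L) = 0 := by
          simpa using (hno j hj0).le (DirectSum.decompose Lc x j).2
        rw [hmem]; exact (Lc 0).zero_mem
    obtain ⟨j, hj0, hjb⟩ := hex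
    obtain ⟨z, hz, hzne⟩ := Submodule.exists_mem_ne_zero_of_ne_bot hjb
    intro hIbot
    apply hzne
    have hzI : z ∈ I := hSQ ⟨j, hj0, hz⟩
    rw [hIbot] at hzI
    simpa using hzI
  -- by simplicity I = ⊤
  have hItop : I = ⊤ := (LieAlgebra.IsSimple.eq_bot_or_eq_top I).resolve_left hIne
  -- conclude: a nonzero element of M (-1) lies in P
  obtain ⟨v, hv, hvne⟩ := Submodule.exists_mem_ne_zero_of_ne_bot hM1
  have hvP : v ∈ P := by
    have : v ∈ I := by rw [hItop]; trivial
    exact hQP this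
  -- but M (-1) meets P trivially
  obtain ⟨f, hf, hfsum⟩ := (Submodule.mem_iSup_iff_exists_finsupp
    (fun i : {i : ℤ // 0 ≤ i} => M i.1) v).mp hvP
  set T : Finset ℤ := f.support.image Subtype.val with hT
  set g : ℤ → L := fun i => if hi : 0 ≤ i then f ⟨i, hi⟩ else 0 with hg
  have hgmem : ∀ i, g i ∈ M i := by
    intro i
    simp only [hg]
    by_cases hi : 0 ≤ i
    · rw [dif_pos hi]; exact hf ⟨i, hi⟩
    · rw [dif_neg hi]; exact (M i).zero_mem
  have hvsum : v = ∑ i ∈ T, g i := by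
    rw [← hfsum, Finsupp.sum, hT]
    rw [Finset.sum_image (fun a _ b _ hab => Subtype.ext hab)]
    apply Finset.sum_congr rfl
    intro a _
    simp only [hg]
    rw [dif_pos a.2]
  have hcompv := compSum T g hgmem (-1)
  rw [← hvsum] at hcompv
  have hTneg : (-1 : ℤ) ∉ T := by
    rw [hT]
    intro hm
    obtain ⟨a, _, ha⟩ := Finset.mem_image.mp hm
    have := a.2
    omega
  rw [if_neg hTneg] at hcompv
  rw [DirectSum.decompose_of_mem_same M hv] at hcompv
  exact hvne hcompv
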